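/- Let d ≥ 0 and l satisfy f(d,l) > 0 with ADAᵀ positive definite, and let d̃ ≥ 0, l̃ satisfy f(d̃,l̃) > 0 with AD̃Aᵀ positive definite, where (1/f(d̃,l̃)) d̃ = α ( (1/f(d,l)) d + (2/(m−1)) (1/γ_j(d,l)²) e_j ) for a scalar α > 0. Then f(d̃,l̃)(AD̃Aᵀ)⁻¹ = (1/α) f(d,l) ( B − (2/(m+1)) (1/(a_jᵀBa_j)) B a_j a_jᵀ B ); consequently γ_j(d̃,l̃)² = (1/α)·((m−1)/(m+1))·γ_j(d,l)², and γ_i(d̃,l̃)² ≤ (1/α)·γ_i(d,l)² for every i ≠ j. -/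

import Mathlib

open Matrix

lemma mul_vecMulVec' {k l p : Type*} [Fintype l] (M : Matrix k l ℝ) (w : l → ℝ) (v : p → ℝ) :
    M * Matrix.vecMulVec w v = Matrix.vecMulVec (M *ᵥ w) v := by
  ext i r
  simp [Matrix.mul_apply, Matrix.vecMulVec_apply, Matrix.mulVec, dotProduct,
    Finset.sum_mul, mul_assoc]

lemma vecMulVec_mul' {k l p : Type*} [Fintype l] (w : k → ℝ) (v : l → ℝ) (M : Matrix l p ℝ) :
    Matrix.vecMulVec w v * M = Matrix.vecMulVec w (v ᵥ* M) := by
  ext i r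
  simp [Matrix.mul_apply, Matrix.vecMulVec_apply, Matrix.vecMul, dotProduct,
    Finset.mul_sum, mul_assoc]

lemma vecMulVec_mulVec' {k l : Type*} [Fintype l] (w : k → ℝ) (v x : l → ℝ) :
    Matrix.vecMulVec w v *ᵥ x = (v ⬝ᵥ x) • w := by
  ext i
  simp only [Matrix.mulVec, Matrix.vecMulVec_apply, dotProduct, Pi.smul_apply,
    smul_eq_mul, Finset.sum_mul]
  exact Finset.sum_congr rfl fun r _ => by ring

lemma smul_vecMulVec' {k l : Type*} (c : ℝ) (w : k → ℝ) (v : l → ℝ) :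
    Matrix.vecMulVec (c • w) v = c • Matrix.vecMulVec w v := by
  ext i r
  simp [Matrix.vecMulVec_apply, mul_assoc]

lemma vecMulVec_zero_left {k l : Type*} (v : l → ℝ) :
    Matrix.vecMulVec (0 : k → ℝ) v = 0 := by
  ext i r
  simp [Matrix.vecMulVec_apply]

lemma diag_single_eq {m : ℕ} (j : Fin m) :
    Matrix.diagonal (Pi.single j 1 : Fin m → ℝ) =
      Matrix.vecMulVec (Pi.single j 1) (Pi.single j 1) := by
  ext i k
  rcases eq_or_ne i j with hi | hi <;> rcases eq_or_ne k j with hk | hk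
  · subst hi; subst hk; simp [Matrix.vecMulVec_apply]
  · subst hi
    simp [Matrix.diagonal_apply, Matrix.vecMulVec_apply, Pi.single_apply, hk, Ne.symm hk]
  · subst hk
    simp [Matrix.diagonal_apply, Matrix.vecMulVec_apply, Pi.single_apply, hi, Ne.symm hi]
  · simp [Matrix.diagonal_apply, Matrix.vecMulVec_apply, Pi.single_apply, hi, hk]

lemma sherman {N : Type*} [Fintype N] [DecidableEq N]
    (M B : Matrix N N ℝ) (a : N → ℝ) (hMB : M * B = 1)
    (s c β t : ℝ) (hs : s ≠ 0) (hc : c ≠ 0)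
    (hcoeff : c * β - t - t * β * c * (a ⬝ᵥ (B *ᵥ a)) = 0 ∨ a = 0) :
    (s • ((1 / c) • M + β • Matrix.vecMulVec a a)) *
      ((s⁻¹ * c) • (B - t • Matrix.vecMulVec (B *ᵥ a) (a ᵥ* B))) = 1 := by
  have h1 : M * Matrix.vecMulVec (B *ᵥ a) (a ᵥ* B) = Matrix.vecMulVec a (a ᵥ* B) := by
    rw [mul_vecMulVec', Matrix.mulVec_mulVec, hMB, Matrix.one_mulVec]
  have h2 : Matrix.vecMulVec a a * B = Matrix.vecMulVec a (a ᵥ* B) := vecMulVec_mul' _ _ _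
  have h3 : Matrix.vecMulVec a a * Matrix.vecMulVec (B *ᵥ a) (a ᵥ* B) =
      (a ⬝ᵥ (B *ᵥ a)) • Matrix.vecMulVec a (a ᵥ* B) := by
    rw [mul_vecMulVec', vecMulVec_mulVec', smul_vecMulVec']
  have key : (s • ((1 / c) • M + β • Matrix.vecMulVec a a)) *
      ((s⁻¹ * c) • (B - t • Matrix.vecMulVec (B *ᵥ a) (a ᵥ* B))) =
      (s * (s⁻¹ * c) * (1 / c)) • (1 : Matrix N N ℝ) +
        (s * (s⁻¹ * c) * (β - t * (1 / c) - t * (β * (a ⬝ᵥ (B *ᵥ a))))) •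
          Matrix.vecMulVec a (a ᵥ* B) := by
    simp only [Matrix.smul_mul, Matrix.mul_smul, Matrix.add_mul, Matrix.mul_sub,
      hMB, h1, h2, h3, smul_smul, smul_sub, smul_add]
    module
  rw [key]
  have hs1 : s * (s⁻¹ * c) * (1 / c) = 1 := by field_simp
  rcases hcoeff with hco | ha0
  · have hs2 : s * (s⁻¹ * c) * (β - t * (1 / c) - t * (β * (a ⬝ᵥ (B *ᵥ a)))) = 0 := by
      have : s * (s⁻¹ * c) = c := by field_simp
      rw [this]
      have : c * (β - t * (1 / c) - t * (β * (a ⬝ᵥ (B *ᵥ a)))) =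
          c * β - t - t * β * c * (a ⬝ᵥ (B *ᵥ a)) := by field_simp
      rw [this, hco]
    rw [hs1, hs2, one_smul, zero_smul, add_zero]
  · rw [ha0, vecMulVec_zero_left, smul_zero, add_zero, hs1, one_smul]

/-- `f(d,l) := rᵀDAᵀBADr - rᵀDr + vᵀDv` with `D = Diag d`, `r = (u+l)/2`, `v = (u-l)/2`,
`B = (ADAᵀ)⁻¹`. -/
noncomputable def fval {n m : ℕ} (A : Matrix (Fin n) (Fin m) ℝ) (u d l : Fin m → ℝ) : ℝ :=
  let D := Matrix.diagonal d
  let r := (u + l) / 2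
  let v := (u - l) / 2
  let B := (A * D * Aᵀ)⁻¹
  r ⬝ᵥ (D *ᵥ (Aᵀ *ᵥ (B *ᵥ (A *ᵥ (D *ᵥ r))))) - r ⬝ᵥ (D *ᵥ r) + v ⬝ᵥ (D *ᵥ v)

/-- `γ_i(d,l) := sqrt(f(d,l) · a_iᵀ B a_i)`. -/
noncomputable def gamma {n m : ℕ} (A : Matrix (Fin n) (Fin m) ℝ) (u d l : Fin m → ℝ)
    (i : Fin m) : ℝ :=
  Real.sqrt (fval A u d l *
    ((fun k => A k i) ⬝ᵥ ((A * Matrix.diagonal d * Aᵀ)⁻¹ *ᵥ (fun k => A k i))))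

/-- The scaled-inverse update identity
`f(d̃,l̃)(AD̃Aᵀ)⁻¹ = (1/α) f(d,l) (B - (2/(m+1)) (1/(a_jᵀBa_j)) B a_j a_jᵀ B)` and the
resulting relations between the semi-widths `γ_i`. -/
theorem stmt_12 {n m : ℕ} (hm : 2 ≤ m) (A : Matrix (Fin n) (Fin m) ℝ) (u : Fin m → ℝ)
    (d l dt lt : Fin m → ℝ) (j : Fin m) (α : ℝ)
    (hd : 0 ≤ d) (hdt : 0 ≤ dt)
    (hpd : (A * Matrix.diagonal d * Aᵀ).PosDef)
    (hpdt : (A * Matrix.diagonal dt * Aᵀ).PosDef)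
    (hf : 0 < fval A u d l) (hft : 0 < fval A u dt lt)
    (hα : 0 < α)
    (hrel : (1 / fval A u dt lt) • dt =
      α • ((1 / fval A u d l) • d +
        (2 / ((m : ℝ) - 1) * (1 / gamma A u d l j ^ 2)) • (Pi.single j 1 : Fin m → ℝ))) :
    fval A u dt lt • (A * Matrix.diagonal dt * Aᵀ)⁻¹ =
      (1 / α) • (fval A u d l •
        ((A * Matrix.diagonal d * Aᵀ)⁻¹ -
          (2 / ((m : ℝ) + 1) *
            (1 / ((fun k => A k j) ⬝ᵥ ((A * Matrix.diagonal d * Aᵀ)⁻¹ *ᵥ (fun k => A k j))))) •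
            Matrix.vecMulVec ((A * Matrix.diagonal d * Aᵀ)⁻¹ *ᵥ (fun k => A k j))
              (Matrix.vecMul (fun k => A k j) (A * Matrix.diagonal d * Aᵀ)⁻¹))) ∧
    gamma A u dt lt j ^ 2 = (1 / α) * (((m : ℝ) - 1) / ((m : ℝ) + 1)) * gamma A u d l j ^ 2 ∧
    ∀ i : Fin m, i ≠ j → gamma A u dt lt i ^ 2 ≤ (1 / α) * gamma A u d l i ^ 2 := by
  have hm1 : ((m : ℝ) - 1) ≠ 0 := by
    have : (2 : ℝ) ≤ (m : ℝ) := by exact_mod_cast hm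
    nlinarith
  have hm2 : ((m : ℝ) + 1) ≠ 0 := by positivity
  have hc : fval A u d l ≠ 0 := hf.ne'
  have hct : fval A u dt lt ≠ 0 := hft.ne'
  have hαne : α ≠ 0 := hα.ne'
  set M := A * Matrix.diagonal d * Aᵀ with hMdef
  set a : Fin n → ℝ := fun k => A k j with hadef
  set B := M⁻¹ with hBdef
  have hdet : IsUnit M.det := isUnit_iff_ne_zero.mpr hpd.det_pos.ne'
  have hMB : M * B = 1 := Matrix.mul_nonsing_inv _ hdet
  have hBpd : B.PosDef := hpd.inv
  have hBsymm : Bᵀ = B := by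
    rw [← Matrix.conjTranspose_eq_transpose_of_trivial]
    exact hBpd.isHermitian
  have hqnn : ∀ x : Fin n → ℝ, 0 ≤ x ⬝ᵥ (B *ᵥ x) := fun x => by
    simpa using hBpd.posSemidef.dotProduct_mulVec_nonneg x
  have hsym : ∀ x y : Fin n → ℝ, x ⬝ᵥ (B *ᵥ y) = y ⬝ᵥ (B *ᵥ x) := by
    intro x y
    calc x ⬝ᵥ (B *ᵥ y) = (x ᵥ* B) ⬝ᵥ y := Matrix.dotProduct_mulVec _ _ _
      _ = (Bᵀ *ᵥ x) ⬝ᵥ y := by rw [Matrix.mulVec_transpose]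
      _ = (B *ᵥ x) ⬝ᵥ y := by rw [hBsymm]
      _ = y ⬝ᵥ (B *ᵥ x) := dotProduct_comm _ _
  have hγ : ∀ i : Fin m, gamma A u d l i ^ 2 =
      fval A u d l * ((fun k => A k i) ⬝ᵥ (B *ᵥ (fun k => A k i))) := fun i =>
    Real.sq_sqrt (mul_nonneg hf.le (hqnn _))
  have hγt : ∀ i : Fin m, gamma A u dt lt i ^ 2 =
      fval A u dt lt *
        ((fun k => A k i) ⬝ᵥ ((A * Matrix.diagonal dt * Aᵀ)⁻¹ *ᵥ (fun k => A k i))) := fun i =>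
    Real.sq_sqrt (mul_nonneg hft.le (by simpa using hpdt.inv.posSemidef.dotProduct_mulVec_nonneg (fun k => A k i)))
  set q : ℝ := a ⬝ᵥ (B *ᵥ a) with hqdef
  set β : ℝ := 2 / ((m : ℝ) - 1) * (1 / gamma A u d l j ^ 2) with hβdef
  set t : ℝ := 2 / ((m : ℝ) + 1) * (1 / q) with htdef
  -- rewrite dt
  have hdt_eq : dt = (fval A u dt lt * α) • ((1 / fval A u d l) • d +
      β • (Pi.single j 1 : Fin m → ℝ)) := by
    have h := congrArg (fun x : Fin m → ℝ => fval A u dt lt • x) hrel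
    simp only [smul_smul] at h
    rw [mul_one_div, div_self hct, one_smul] at h
    exact h
  have hMt_eq : A * Matrix.diagonal dt * Aᵀ =
      (fval A u dt lt * α) • ((1 / fval A u d l) • M + β • Matrix.vecMulVec a a) := by
    have hdiag : Matrix.diagonal ((1 / fval A u d l) • d + β • (Pi.single j 1 : Fin m → ℝ)) =
        (1 / fval A u d l) • Matrix.diagonal d +
          β • Matrix.vecMulVec (Pi.single j 1) (Pi.single j 1) := by
      rw [← diag_single_eq]
      ext i k
      by_cases h : i = k <;> simp [Matrix.diagonal_apply, h]
    conv_lhs => rw [hdt_eq, Matrix.diagonal_smul, hdiag]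
    simp only [Matrix.mul_smul, Matrix.smul_mul, Matrix.mul_add, Matrix.add_mul,
      mul_vecMulVec', vecMulVec_mul', Matrix.vecMul_transpose, Matrix.mulVec_single, mul_one,
      MulOpposite.op_one, one_smul]
    rfl
  have hq0 : 0 ≤ q := hqnn a
  have hcoeff : fval A u d l * β - t - t * β * fval A u d l * q = 0 ∨ a = 0 := by
    by_cases ha0 : a = 0
    · exact Or.inr ha0
    · left
      have hqpos : 0 < q := by simpa using hBpd.dotProduct_mulVec_pos ha0
      have hγj : gamma A u d l j ^ 2 = fval A u d l * q := hγ j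
      rw [hβdef, htdef, hγj]
      field_simp
      ring
  have hMtinv : (A * Matrix.diagonal dt * Aᵀ)⁻¹ =
      ((fval A u dt lt * α)⁻¹ * fval A u d l) •
        (B - t • Matrix.vecMulVec (B *ᵥ a) (a ᵥ* B)) := by
    apply Matrix.inv_eq_right_inv
    rw [hMt_eq]
    exact sherman M B a hMB _ _ _ _ (mul_ne_zero hct hαne) hc hcoeff
  have hscal : fval A u dt lt * ((fval A u dt lt * α)⁻¹ * fval A u d l) =
      1 / α * fval A u d l := by field_simp
  refine ⟨?_, ?_, ?_⟩
  · rw [hMtinv, smul_smul, hscal, ← smul_smul]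
  · rw [hγt j, hγ j, hMtinv]
    have hWa : Matrix.vecMulVec (B *ᵥ a) (a ᵥ* B) *ᵥ a = (q : ℝ) • (B *ᵥ a) := by
      rw [vecMulVec_mulVec', ← Matrix.dotProduct_mulVec, ← hqdef]
    rw [Matrix.smul_mulVec, Matrix.sub_mulVec, Matrix.smul_mulVec, hWa]
    simp only [dotProduct_smul, dotProduct_sub, smul_eq_mul]
    rw [← hqdef]
    rcases eq_or_lt_of_le hq0 with hq | hq
    · rw [← hq]; ring
    · rw [htdef]; field_simp; ring
  · intro i hij
    rw [hγt i, hγ i, hMtinv]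
    set ai : Fin n → ℝ := fun k => A k i with haidef
    have hWai : Matrix.vecMulVec (B *ᵥ a) (a ᵥ* B) *ᵥ ai =
        ((B *ᵥ a) ⬝ᵥ ai) • (B *ᵥ a) := by
      rw [vecMulVec_mulVec', ← Matrix.dotProduct_mulVec, hsym a ai,
        dotProduct_comm]
    rw [Matrix.smul_mulVec, Matrix.sub_mulVec, Matrix.smul_mulVec, hWai]
    simp only [dotProduct_smul, dotProduct_sub, smul_eq_mul]
    have hx : ai ⬝ᵥ (B *ᵥ a) = (B *ᵥ a) ⬝ᵥ ai := dotProduct_comm _ _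
    rw [hx]
    have ht0 : 0 ≤ t := by
      rw [htdef]
      have : (0:ℝ) < (m : ℝ) + 1 := by positivity
      positivity
    have hsub : ai ⬝ᵥ (B *ᵥ ai) - t * ((B *ᵥ a) ⬝ᵥ ai * ((B *ᵥ a) ⬝ᵥ ai)) ≤
        ai ⬝ᵥ (B *ᵥ ai) := by nlinarith [sq_nonneg ((B *ᵥ a) ⬝ᵥ ai)]
    calc fval A u dt lt * (((fval A u dt lt * α)⁻¹ * fval A u d l) *
          (ai ⬝ᵥ (B *ᵥ ai) - t * ((B *ᵥ a) ⬝ᵥ ai * ((B *ᵥ a) ⬝ᵥ ai))))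
        = (1 / α * fval A u d l) *
          (ai ⬝ᵥ (B *ᵥ ai) - t * ((B *ᵥ a) ⬝ᵥ ai * ((B *ᵥ a) ⬝ᵥ ai))) := by
          rw [← mul_assoc, hscal]
      _ ≤ (1 / α * fval A u d l) * (ai ⬝ᵥ (B *ᵥ ai)) := by
          apply mul_le_mul_of_nonneg_left hsub
          positivity
      _ = 1 / α * (fval A u d l * (ai ⬝ᵥ (B *ᵥ ai))) := by ring
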